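/- arXiv:2404.18281 — 6 statements merged into one kernel-verified Lean document; each statement's English description precedes it below -/
import Mathlib

section
/- For all integers 1 ≤ j ≤ k, F(k,j) = F(k,j−1) − (−1)^k F(k−1,j−1) + (−1)^{⌊k/2⌋} F_{k−1}. -/
open Filter Finset Real

/-- `F_n := (2^{n+1} − 4^{n+1}) B_{n+1}/(n+1)`, with Bernoulli numbers `B_1 = -1/2`. -/
def Fnum (n : ℕ) : ℚ := (2 ^ (n + 1) - 4 ^ (n + 1)) * bernoulli (n + 1) / (n + 1)

/-- `F(k,j) := (−1)^{⌊k/2⌋} ∑_{n=1}^{j} binom(j,n) F_{k−n}`. -/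
def Fcal (k j : ℕ) : ℚ :=
  (-1 : ℚ) ^ (k / 2) * ∑ n ∈ Finset.Icc 1 j, (j.choose n : ℚ) * Fnum (k - n)

lemma sum_Icc_one_eq (J : ℕ) (g : ℕ → ℚ) :
    ∑ n ∈ Finset.Icc 1 J, g n = ∑ i ∈ Finset.range J, g (i + 1) := by
  induction J with
  | zero => simp
  | succ J ih =>
    rw [Finset.sum_Icc_succ_top (by omega), ih, Finset.sum_range_succ]

lemma Fsum_rec (k0 j' : ℕ) :
    ∑ n ∈ Finset.Icc 1 (j' + 1), ((j' + 1).choose n : ℚ) * Fnum (k0 + 1 - n) =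
      (∑ n ∈ Finset.Icc 1 j', (j'.choose n : ℚ) * Fnum (k0 + 1 - n)) + Fnum k0 +
        ∑ n ∈ Finset.Icc 1 j', (j'.choose n : ℚ) * Fnum (k0 - n) := by
  rw [sum_Icc_one_eq, sum_Icc_one_eq, sum_Icc_one_eq]
  have h1 : ∀ i : ℕ, ((j' + 1).choose (i + 1) : ℚ)
      = (j'.choose (i + 1) : ℚ) + (j'.choose i : ℚ) := by
    intro i; rw [Nat.choose_succ_succ]; push_cast; ring
  simp only [h1, add_mul]
  rw [Finset.sum_add_distrib]
  have hA : ∑ i ∈ Finset.range (j' + 1), (j'.choose (i + 1) : ℚ) * Fnum (k0 + 1 - (i + 1))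
      = ∑ i ∈ Finset.range j', (j'.choose (i + 1) : ℚ) * Fnum (k0 + 1 - (i + 1)) := by
    rw [Finset.sum_range_succ, Nat.choose_succ_self]
    simp
  have hB : ∑ i ∈ Finset.range (j' + 1), (j'.choose i : ℚ) * Fnum (k0 + 1 - (i + 1))
      = Fnum k0 + ∑ i ∈ Finset.range j', (j'.choose (i + 1) : ℚ) * Fnum (k0 - (i + 1)) := by
    rw [Finset.sum_range_succ', add_comm]
    congr 1
    · simp
    · refine Finset.sum_congr rfl fun i _ => ?_
      congr 2
      omega
  rw [hA, hB]
  ring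

lemma neg_one_pow_half (k0 : ℕ) :
    ((-1 : ℚ)) ^ ((k0 + 1) / 2) = (-1 : ℚ) ^ (k0 + k0 / 2) := by
  have h : (k0 + 1) / 2 + k0 / 2 = k0 := by omega
  have h2 : ((-1 : ℚ)) ^ ((k0 + 1) / 2) * (-1) ^ (k0 / 2) = (-1 : ℚ) ^ k0 := by
    rw [← pow_add, h]
  calc ((-1 : ℚ)) ^ ((k0 + 1) / 2)
      = ((-1 : ℚ)) ^ ((k0 + 1) / 2) * ((-1) ^ (k0 / 2) * (-1) ^ (k0 / 2)) := by
        rw [← pow_add, ← two_mul, pow_mul]; norm_num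
    _ = (-1 : ℚ) ^ k0 * (-1) ^ (k0 / 2) := by rw [← mul_assoc, h2]
    _ = (-1 : ℚ) ^ (k0 + k0 / 2) := by rw [pow_add]

/-- For all integers `1 ≤ j ≤ k`,
`F(k,j) = F(k,j−1) − (−1)^k F(k−1,j−1) + (−1)^{⌊k/2⌋} F_{k−1}`. -/
theorem Fcal_recurrence (k j : ℕ) (hj : 1 ≤ j) (hjk : j ≤ k) :
    Fcal k j =
      Fcal k (j - 1) - (-1 : ℚ) ^ k * Fcal (k - 1) (j - 1) +
        (-1 : ℚ) ^ (k / 2) * Fnum (k - 1) := by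
  obtain ⟨j', rfl⟩ : ∃ j', j = j' + 1 := ⟨j - 1, by omega⟩
  obtain ⟨k0, rfl⟩ : ∃ k0, k = k0 + 1 := ⟨k - 1, by omega⟩
  simp only [Nat.add_sub_cancel, Fcal]
  rw [Fsum_rec, neg_one_pow_half, pow_add, pow_add]
  ring
end

section
/- For all integers 1 ≤ j ≤ k, G(k,j) = G(k,j−1) + (−1)^k G(k−1,j−1) + 𝔾_{k−1}. -/
open Filter Finset Real

/-- Genocchi numbers `G_n := 2(1 − 2ⁿ)Bₙ`, with Bernoulli numbers `B_1 = -1/2`. -/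
def Gnum (n : ℕ) : ℚ := 2 * (1 - 2 ^ n) * bernoulli n

/-- `𝔾_n := (−1)^{⌊n/2⌋} G_n`. -/
def GGnum (n : ℕ) : ℚ := (-1) ^ (n / 2) * Gnum n

/-- `G(k,j) := (−1)^{⌊(k−1)/2⌋} ∑_{n=1}^{j} binom(j,n) G_{k−n}` (floor over ℤ). -/
def Gcal (k j : ℕ) : ℚ :=
  (-1 : ℚ) ^ (Int.fdiv ((k : ℤ) - 1) 2) *
    ∑ n ∈ Finset.Icc 1 j, (j.choose n : ℚ) * Gnum (k - n)

/-- The unsigned inner sum, reindexed over `range j`. -/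
noncomputable def S (k j : ℕ) : ℚ :=
  ∑ i ∈ Finset.range j, (j.choose (i+1) : ℚ) * Gnum (k - (i+1))

lemma gcal_eq (k j : ℕ) (hk : 1 ≤ k) :
    Gcal k j = (-1:ℚ)^((k-1)/2) * S k j := by
  have h1 : ((k:ℤ) - 1) = ((k - 1 : ℕ) : ℤ) := by omega
  have h2 : Int.fdiv ((k:ℤ) - 1) 2 = (((k-1)/2 : ℕ) : ℤ) := by
    rw [h1, Int.fdiv_eq_ediv_of_nonneg _ (by norm_num)]
    norm_cast
  rw [Gcal, h2, zpow_natCast, S]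
  congr 1
  rw [← Finset.Ico_add_one_right_eq_Icc, Finset.sum_Ico_eq_sum_range]
  apply Finset.sum_congr (by norm_num)
  intro i _
  rw [add_comm 1 i]

lemma sign_rel (K : ℕ) : ((-1:ℚ)^((K+1)/2)) = (-1)^K * (-1)^(K/2) := by
  rcases Nat.even_or_odd K with ⟨m, hm⟩ | ⟨m, hm⟩
  · subst hm
    have h1 : (m + m + 1)/2 = m := by omega
    have h2 : (m + m)/2 = m := by omega
    rw [h1, h2, ← two_mul, pow_mul]; norm_num
  · subst hm
    have h1 : (2*m + 1 + 1)/2 = m + 1 := by omega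
    have h2 : (2*m + 1)/2 = m := by omega
    rw [h1, h2, pow_succ, pow_add, pow_mul]; norm_num

lemma key (k J : ℕ) : S k (J+1) = S k J + S (k-1) J + Gnum (k-1) := by
  have hc : ∀ i, (((J+1).choose (i+1) : ℚ)) = J.choose i + J.choose (i+1) := by
    intro i
    rw [Nat.choose_succ_succ]; push_cast; ring
  have h1 : ∑ i ∈ Finset.range (J+1), (J.choose (i+1) : ℚ) * Gnum (k - (i+1)) = S k J := by
    rw [Finset.sum_range_succ, Nat.choose_succ_self]
    simp [S]
  have h2 : ∑ i ∈ Finset.range (J+1), (J.choose i : ℚ) * Gnum (k - (i+1))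
      = Gnum (k-1) + S (k-1) J := by
    rw [Finset.sum_range_succ']
    simp only [Nat.choose_zero_right, Nat.cast_one, one_mul]
    rw [add_comm]
    congr 1
    apply Finset.sum_congr rfl
    intro i _
    congr 2
    omega
  calc S k (J+1) = ∑ i ∈ Finset.range (J+1),
        ((J.choose i : ℚ) * Gnum (k - (i+1)) + (J.choose (i+1) : ℚ) * Gnum (k - (i+1))) := by
        apply Finset.sum_congr rfl; intro i _; rw [hc]; ring
    _ = _ := by rw [Finset.sum_add_distrib, h1, h2]; ring

/-- For all integers `1 ≤ j ≤ k`,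
`G(k,j) = G(k,j−1) + (−1)^k G(k−1,j−1) + 𝔾_{k−1}`. -/
theorem Gcal_recurrence (k j : ℕ) (hj : 1 ≤ j) (hjk : j ≤ k) :
    Gcal k j =
      Gcal k (j - 1) + (-1 : ℚ) ^ k * Gcal (k - 1) (j - 1) + GGnum (k - 1) := by
  obtain ⟨K, rfl⟩ : ∃ K, k = K + 1 := ⟨k - 1, by omega⟩
  obtain ⟨J, rfl⟩ : ∃ J, j = J + 1 := ⟨j - 1, by omega⟩
  simp only [Nat.add_sub_cancel]
  rcases Nat.eq_zero_or_pos J with rfl | hJ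
  · rw [gcal_eq _ _ (by omega)]
    simp only [Nat.add_sub_cancel]
    have : S (K+1) 1 = Gnum K := by simp [S]
    rw [this]
    have h0 : ∀ m : ℕ, Gcal m 0 = 0 := by intro m; simp [Gcal]
    rw [h0, h0, GGnum]
    simp
  · obtain ⟨K', rfl⟩ : ∃ K', K = K' + 1 := ⟨K - 1, by omega⟩
    rw [gcal_eq _ _ (by omega), gcal_eq _ _ (by omega), gcal_eq _ _ (by omega)]
    simp only [Nat.add_sub_cancel]
    rw [key, GGnum]
    have hg : Gnum (K'+1+1-1) = Gnum (K'+1) := by norm_num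
    rw [hg]
    rw [sign_rel K']
    have h2 : (K'+1+1 : ℕ) = K' + 2 := rfl
    rw [h2]
    have h3 : ((-1:ℚ))^(K'+2) = (-1)^K' := by rw [pow_add]; norm_num
    rw [h3]
    have h5 : (K'+2-1 : ℕ) = K'+1 := rfl
    rw [h5]
    ring
end

section
/- For all integers 1 ≤ j ≤ k, H(k,j) = H(k,j−1) + (−1)^k H(k−1,j−1) − (−1)^j 𝔾_{k−1}. -/
open Filter Finset Real

/-- `h(j,n) := ∑_{u=n}^{j} (−1)^{j−u} binom(u−1, n−1)`. -/
def hnum (j n : ℕ) : ℤ :=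
  ∑ u ∈ Finset.Icc n j, (-1 : ℤ) ^ (j - u) * ((u - 1).choose (n - 1))

/-- `H(k,j) := (−1)^{⌊(k−1)/2⌋} ∑_{n=1}^{j} h(j,n) G_{k−n}` (floor over ℤ). -/
def Hcal (k j : ℕ) : ℚ :=
  (-1 : ℚ) ^ (Int.fdiv ((k : ℤ) - 1) 2) *
    ∑ n ∈ Finset.Icc 1 j, (hnum j n : ℚ) * Gnum (k - n)

lemma hnum_zero_of_lt {j n : ℕ} (h : j < n) : hnum j n = 0 := by
  unfold hnum
  rw [Finset.Icc_eq_empty (by omega)]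
  simp

lemma hnum_one (j : ℕ) : hnum j 1 = if Even j then 0 else 1 := by
  induction j with
  | zero => simp [hnum]
  | succ j ih =>
    have key : hnum (j+1) 1 = 1 - hnum j 1 := by
      unfold hnum
      rw [Finset.sum_Icc_succ_top (by omega)]
      have : ∀ u ∈ Finset.Icc 1 j, (-1 : ℤ) ^ (j + 1 - u) * ((u - 1).choose (1 - 1))
          = -((-1 : ℤ) ^ (j - u) * ((u - 1).choose (1 - 1))) := by
        intro u hu
        simp only [Finset.mem_Icc] at hu
        rw [show j + 1 - u = (j - u) + 1 by omega, pow_succ]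
        ring
      rw [Finset.sum_congr rfl this, Finset.sum_neg_distrib]
      simp
      ring
    rw [key, ih]
    rcases Nat.even_or_odd j with h | h
    · simp [h, Nat.even_add_one]
    · simp [Nat.not_even_iff_odd.mpr h, Nat.even_add_one, Nat.not_even_iff_odd]

lemma hnum_pascal (j n : ℕ) : hnum (j+1) (n+2) = hnum j (n+2) + hnum j (n+1) := by
  unfold hnum
  have hmap : Finset.Icc (n+2) (j+1) = (Finset.Icc (n+1) j).map (addRightEmbedding 1) := by
    rw [Finset.map_add_right_Icc]
  rw [hmap, Finset.sum_map]
  have step : ∀ v ∈ Finset.Icc (n+1) j,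
      (-1:ℤ) ^ (j + 1 - (addRightEmbedding 1 v)) * (((addRightEmbedding 1 v) - 1).choose (n+2-1))
      = (-1:ℤ) ^ (j - v) * ((v - 1).choose (n+2-1)) + (-1:ℤ) ^ (j - v) * ((v-1).choose (n+1-1)) := by
    intro v hv
    simp only [Finset.mem_Icc] at hv
    simp only [addRightEmbedding_apply, Nat.add_sub_cancel]
    rw [show j + 1 - (v + 1) = j - v by omega, show n + 2 - 1 = n + 1 from rfl]
    rw [show v.choose (n+1) = (v-1).choose n + (v-1).choose (n+1) by
      conv_lhs => rw [show v = (v - 1) + 1 by omega]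
      exact Nat.choose_succ_succ _ _]
    push_cast
    ring
  rw [Finset.sum_congr rfl step, Finset.sum_add_distrib]
  congr 1
  refine (Finset.sum_subset (fun x hx => ?_) (fun x hx hx2 => ?_)).symm
  · simp only [Finset.mem_Icc] at *; omega
  · simp only [Finset.mem_Icc] at hx hx2
    have : x = n + 1 := by omega
    subst this
    simp [Nat.choose_eq_zero_of_lt (by omega : n < n + 1)]

lemma neg_one_zpow_congr {a b : ℤ} (h : a % 2 = b % 2) : (-1:ℚ)^a = (-1:ℚ)^b := by
  rcases Int.even_or_odd a with ha | ha
  · have hb : Even b := by rw [Int.even_iff] at *; omega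
    rw [ha.neg_one_zpow, hb.neg_one_zpow]
  · have hb : Odd b := by rw [Int.odd_iff] at *; omega
    rw [ha.neg_one_zpow, hb.neg_one_zpow]

lemma fdiv2_eq {a b : ℤ} (h : a = 2*b ∨ a = 2*b+1) : a.fdiv 2 = b := by
  rw [Int.fdiv_eq_ediv_of_nonneg _ (by norm_num)]; omega

lemma eps_succ (K : ℕ) :
    (-1:ℚ)^(K+1) * (-1:ℚ)^(Int.fdiv ((K:ℤ)-1) 2) = (-1:ℚ)^(Int.fdiv (((K:ℕ)+1:ℤ)-1) 2) := by
  have hpow : ((-1:ℚ)^(K+1) : ℚ) = (-1:ℚ)^(((K:ℕ)+1 : ℤ)) := by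
    rw [← zpow_natCast]; norm_num
  rcases Nat.even_or_odd K with ⟨m, rfl⟩ | ⟨m, rfl⟩
  · rw [fdiv2_eq (b := (m:ℤ)-1) (by push_cast; omega),
      fdiv2_eq (b := (m:ℤ)) (by push_cast; omega), hpow,
      ← zpow_add₀ (by norm_num : (-1:ℚ) ≠ 0)]
    apply neg_one_zpow_congr; omega
  · rw [fdiv2_eq (b := (m:ℤ)) (by push_cast; omega),
      fdiv2_eq (b := (m:ℤ)) (by push_cast; omega), hpow,
      ← zpow_add₀ (by norm_num : (-1:ℚ) ≠ 0)]
    apply neg_one_zpow_congr; omega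

lemma GG_eq (K : ℕ) : GGnum K = (-1:ℚ)^(Int.fdiv (((K:ℕ)+1:ℤ)-1) 2) * Gnum K := by
  unfold GGnum
  rw [fdiv2_eq (b := ((K/2 : ℕ) : ℤ)) (by omega), ← zpow_natCast (-1:ℚ) (K/2)]

/-- For all integers `1 ≤ j ≤ k`,
`H(k,j) = H(k,j−1) + (−1)^k H(k−1,j−1) − (−1)^j 𝔾_{k−1}`. -/
theorem Hcal_recurrence (k j : ℕ) (hj : 1 ≤ j) (hjk : j ≤ k) :
    Hcal k j =
      Hcal k (j - 1) + (-1 : ℚ) ^ k * Hcal (k - 1) (j - 1) -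
        (-1 : ℚ) ^ j * GGnum (k - 1) := by
  obtain ⟨J, rfl⟩ : ∃ J, j = J + 1 := ⟨j - 1, by omega⟩
  obtain ⟨K, rfl⟩ : ∃ K, k = K + 1 := ⟨k - 1, by omega⟩
  have hJK : J ≤ K := by omega
  simp only [Nat.add_sub_cancel]
  -- key sum identity
  have key : ∑ n ∈ Finset.Icc 1 (J+1), (hnum (J+1) n : ℚ) * Gnum (K+1 - n)
      = (∑ n ∈ Finset.Icc 1 J, (hnum J n : ℚ) * Gnum (K+1 - n))
        + (∑ n ∈ Finset.Icc 1 J, (hnum J n : ℚ) * Gnum (K - n))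
        + (-1:ℚ)^J * Gnum K := by
    -- split off n = 1
    have split : ∀ (f : ℕ → ℚ), ∑ n ∈ Finset.Icc 1 (J+1), f n
        = f 1 + ∑ n ∈ Finset.Icc 2 (J+1), f n := by
      intro f
      rw [show Finset.Icc 1 (J+1) = insert 1 (Finset.Icc 2 (J+1)) by
        ext x; simp [Finset.mem_Icc, Finset.mem_insert]; omega]
      rw [Finset.sum_insert (by simp)]
    rw [split]
    have step : ∀ n ∈ Finset.Icc 2 (J+1), (hnum (J+1) n : ℚ) * Gnum (K+1-n)
        = (hnum J n : ℚ) * Gnum (K+1-n) + (hnum J (n-1) : ℚ) * Gnum (K+1-n) := by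
      intro n hn
      simp only [Finset.mem_Icc] at hn
      obtain ⟨m, rfl⟩ : ∃ m, n = m + 2 := ⟨n - 2, by omega⟩
      rw [hnum_pascal]
      push_cast
      ring
    rw [Finset.sum_congr rfl step, Finset.sum_add_distrib]
    have h1 : (hnum (J+1) 1 : ℚ) = (hnum J 1 : ℚ) + (-1:ℚ)^J := by
      rw [hnum_one, hnum_one]
      rcases Nat.even_or_odd J with h | h
      · simp [h, Nat.even_add_one, Nat.not_even_iff_odd.mp, h.neg_one_pow]
      · simp [Nat.not_even_iff_odd.mpr h, Nat.even_add_one, h.neg_one_pow]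
    have piece2 : ∑ n ∈ Finset.Icc 2 (J+1), (hnum J n : ℚ) * Gnum (K+1-n)
        = ∑ n ∈ Finset.Icc 2 J, (hnum J n : ℚ) * Gnum (K+1-n) := by
      refine (Finset.sum_subset (fun x hx => ?_) (fun x hx hx2 => ?_)).symm
      · simp only [Finset.mem_Icc] at *; omega
      · simp only [Finset.mem_Icc] at hx hx2
        have : x = J + 1 := by omega
        subst this
        rw [hnum_zero_of_lt (by omega)]
        simp
    have piece3 : ∑ n ∈ Finset.Icc 2 (J+1), (hnum J (n-1) : ℚ) * Gnum (K+1-n)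
        = ∑ n ∈ Finset.Icc 1 J, (hnum J n : ℚ) * Gnum (K-n) := by
      rw [show Finset.Icc 2 (J+1) = (Finset.Icc 1 J).map (addRightEmbedding 1) by
        rw [Finset.map_add_right_Icc]]
      rw [Finset.sum_map]
      refine Finset.sum_congr rfl (fun x hx => ?_)
      simp only [Finset.mem_Icc] at hx
      simp only [addRightEmbedding_apply, Nat.add_sub_cancel]
      rw [show K + 1 - (x + 1) = K - x by omega]
    have merge : (hnum J 1 : ℚ) * Gnum (K+1-1)
          + ∑ n ∈ Finset.Icc 2 J, (hnum J n : ℚ) * Gnum (K+1-n)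
        = ∑ n ∈ Finset.Icc 1 J, (hnum J n : ℚ) * Gnum (K+1-n) := by
      rcases Nat.eq_zero_or_pos J with h | h
      · subst h
        simp [hnum_zero_of_lt (by omega : (0:ℕ) < 1)]
      · rw [show Finset.Icc 1 J = insert 1 (Finset.Icc 2 J) by
          ext x; simp [Finset.mem_Icc, Finset.mem_insert]; omega]
        rw [Finset.sum_insert (by simp)]
    rw [h1, piece2, piece3, ← merge, show K + 1 - 1 = K by omega]
    ring
  unfold Hcal
  rw [key]
  rw [mul_add, mul_add]
  have e1 : (-1:ℚ)^(Int.fdiv (((K:ℕ)+1:ℤ)-1) 2) * ((-1:ℚ)^J * Gnum K)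
      = -((-1:ℚ)^(J+1) * GGnum K) := by
    rw [GG_eq]
    rw [pow_succ]
    ring
  have e2 : (-1:ℚ)^(Int.fdiv (((K:ℕ)+1:ℤ)-1) 2) * ∑ n ∈ Finset.Icc 1 J, (hnum J n : ℚ) * Gnum (K - n)
      = (-1:ℚ)^(K+1) * ((-1:ℚ)^(Int.fdiv ((K:ℤ)-1) 2) * ∑ n ∈ Finset.Icc 1 J, (hnum J n : ℚ) * Gnum (K - n)) := by
    rw [← mul_assoc, eps_succ]
  push_cast at e1 e2 ⊢
  rw [e1, e2]
  ring
end

section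
/- For all integers 1 ≤ j ≤ k, H(k,j) = −H(k,j−1) + (−1)^k G(k−1,j−1) + 𝔾_{k−1}. -/
open Filter Finset Real

lemma hnum_add (j n : ℕ) (hj : n ≤ j + 1) :
    hnum (j+1) n + hnum j n = (j.choose (n-1)) := by
  unfold hnum
  rw [Finset.sum_Icc_succ_top hj]
  rw [Finset.sum_congr rfl (fun u hu => by
    simp only [Finset.mem_Icc] at hu
    rw [show j+1-u = (j-u)+1 by omega, pow_succ])]
  simp

lemma fdiv_nat (n : ℕ) : Int.fdiv (n:ℤ) 2 = ((n/2 : ℕ) : ℤ) := by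
  rw [Int.fdiv_eq_ediv_of_nonneg _ (by norm_num)]
  omega

lemma sign1 (m : ℕ) : (-1:ℚ)^(m+2) * (-1:ℚ)^(m/2) = (-1:ℚ)^((m+1)/2) := by
  obtain ⟨t, rfl | rfl⟩ := Nat.even_or_odd' m
  · rw [show (2*t+1)/2 = t by omega, show 2*t/2 = t by omega,
      show 2*t+2 = 2*(t+1) by ring, pow_mul]
    norm_num
  · rw [show (2*t+1+1)/2 = t+1 by omega, show (2*t+1)/2 = t by omega,
      show 2*t+1+2 = 2*(t+1)+1 by ring, pow_succ, pow_mul, pow_succ]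
    ring_nf

lemma key_s10 (k j' : ℕ) (hk : j' + 1 ≤ k) :
    (∑ n ∈ Finset.Icc 1 (j'+1), (hnum (j'+1) n : ℚ) * Gnum (k-n)) +
      (∑ n ∈ Finset.Icc 1 j', (hnum j' n : ℚ) * Gnum (k-n))
    = (∑ n ∈ Finset.Icc 1 j', ((j'.choose n : ℚ)) * Gnum (k-1-n)) + Gnum (k-1) := by
  have h0 : hnum j' (j'+1) = 0 := by
    simp [hnum, Finset.Icc_eq_empty_of_lt (by omega : j' < j'+1)]
  have hext : (∑ n ∈ Finset.Icc 1 j', (hnum j' n : ℚ) * Gnum (k-n))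
      = ∑ n ∈ Finset.Icc 1 (j'+1), (hnum j' n : ℚ) * Gnum (k-n) := by
    rw [Finset.sum_Icc_succ_top (by omega), h0]
    simp
  rw [hext, ← Finset.sum_add_distrib]
  have hcomb : ∀ n ∈ Finset.Icc 1 (j'+1),
      (hnum (j'+1) n : ℚ) * Gnum (k-n) + (hnum j' n : ℚ) * Gnum (k-n)
        = (j'.choose (n-1) : ℚ) * Gnum (k-n) := by
    intro n hn
    simp only [Finset.mem_Icc] at hn
    have := hnum_add j' n hn.2
    have : ((hnum (j'+1) n : ℚ) + (hnum j' n : ℚ)) = (j'.choose (n-1) : ℚ) := by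
      exact_mod_cast congrArg (Int.cast : ℤ → ℚ) this
    rw [← this]; ring
  rw [Finset.sum_congr rfl hcomb]
  -- convert both Icc sums to range sums
  rw [show Finset.Icc 1 (j'+1) = Finset.Ico 1 (j'+2) from (Finset.Ico_add_one_right_eq_Icc (a := 1) (b := j'+1)).symm,
    show Finset.Icc 1 j' = Finset.Ico 1 (j'+1) from by rw [Finset.Ico_add_one_right_eq_Icc],
    Finset.sum_Ico_eq_sum_range, Finset.sum_Ico_eq_sum_range]
  simp only [Nat.add_sub_cancel, show j'+2-1 = j'+1 by omega]
  rw [Finset.sum_range_succ']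
  have : ∀ i ∈ Finset.range j',
      (j'.choose (1+(i+1)-1) : ℚ) * Gnum (k-(1+(i+1)))
        = (j'.choose (1+i) : ℚ) * Gnum (k-1-(1+i)) := by
    intro i _
    rw [show 1+(i+1)-1 = 1+i by omega, show k-(1+(i+1)) = k-1-(1+i) by omega]
  rw [Finset.sum_congr rfl this]
  simp [show k - (1+0) = k - 1 by omega]

/-- For all integers `1 ≤ j ≤ k`,
`H(k,j) = −H(k,j−1) + (−1)^k G(k−1,j−1) + 𝔾_{k−1}`. -/
theorem Hcal_Gcal_recurrence (k j : ℕ) (hj : 1 ≤ j) (hjk : j ≤ k) :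
    Hcal k j =
      -Hcal k (j - 1) + (-1 : ℚ) ^ k * Gcal (k - 1) (j - 1) + GGnum (k - 1) := by
  rcases Nat.lt_or_ge k 2 with hk | hk
  · have hk1 : k = 1 := by omega
    have hj1 : j = 1 := by omega
    subst hk1 hj1
    norm_num [Hcal, Gcal, GGnum, hnum, Gnum]
  obtain ⟨m, rfl⟩ : ∃ m, k = m + 2 := ⟨k-2, by omega⟩
  obtain ⟨j', rfl⟩ : ∃ j', j = j'+1 := ⟨j-1, by omega⟩
  unfold Hcal Gcal GGnum
  have e1 : ((↑(m+2) : ℤ) - 1) = ((m+1 : ℕ) : ℤ) := by push_cast; ring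
  have e2 : ((↑(m+2-1) : ℤ) - 1) = ((m : ℕ) : ℤ) := by
    rw [show m+2-1 = m+1 from rfl]; push_cast; ring
  rw [e1, e2, fdiv_nat, fdiv_nat, zpow_natCast, zpow_natCast]
  simp only [Nat.add_sub_cancel, show m+2-1 = m+1 from rfl, show j'+1-1 = j' from rfl]
  have hkey := key_s10 (m+2) j' (by omega)
  simp only [show m+2-1 = m+1 from rfl] at hkey
  rw [← mul_assoc, sign1 m]
  linear_combination ((-1:ℚ)^((m+1)/2)) * hkey
end

section
/- For every integer k ≥ 0, H(k,k) = 0. -/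
open Filter Finset Real

section Aux

open Nat PowerSeries

def Qg (a b : ℕ) : ℚ := ∑ m ∈ Finset.range (a+1), (a.choose m : ℚ) * Gnum (b + m)

noncomputable def Gser : PowerSeries ℚ := PowerSeries.mk fun n => Gnum n / n !

noncomputable def Bser : PowerSeries ℚ := PowerSeries.mk fun n => bernoulli n / n !

lemma Bser_spec : Bser * (exp ℚ - 1) = X := by
  simpa [Bser, bernoulliPowerSeries] using bernoulliPowerSeries_mul_exp_sub_one ℚ

lemma two_eq_C : (2 : PowerSeries ℚ) = C (2 : ℚ) := by
  rw [show (2:ℚ) = 1 + 1 by norm_num, map_add, map_one]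
  norm_num

lemma Gser_eq : Gser = 2 * (Bser - rescale 2 Bser) := by
  ext n
  rw [two_eq_C, coeff_C_mul, map_sub]
  simp [Gser, Bser, Gnum, coeff_rescale, PowerSeries.coeff_mk]
  ring

lemma exp_sub_one_ne : (exp ℚ - 1) ≠ 0 := by
  intro h
  have := congrArg (PowerSeries.coeff 1) h
  simp [coeff_exp] at this

lemma Gser_spec : (exp ℚ + 1) * Gser = 2 * X := by
  apply mul_left_cancel₀ exp_sub_one_ne
  have h2 : (exp ℚ) ^ 2 = rescale (2 : ℚ) (exp ℚ) := by
    simpa using exp_pow_eq_rescale_exp (A := ℚ) 2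
  have hX : rescale (2 : ℚ) (X : PowerSeries ℚ) = 2 * X := by
    ext n
    rw [two_eq_C, coeff_C_mul, coeff_rescale, PowerSeries.coeff_X]
    rcases eq_or_ne n 1 with rfl | h
    · simp
    · simp [PowerSeries.coeff_X, if_neg h]
  calc (exp ℚ - 1) * ((exp ℚ + 1) * Gser)
      = (exp ℚ + 1) * ((exp ℚ - 1) * Gser) := by ring
    _ = (exp ℚ + 1) * ((exp ℚ - 1) * (2 * (Bser - rescale 2 Bser))) := by rw [Gser_eq]
    _ = 2 * (((exp ℚ)^2 - 1) * Bser - (exp ℚ - 1)*(exp ℚ + 1) * rescale 2 Bser) := by ring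
    _ = 2 * ((exp ℚ + 1) * (Bser * (exp ℚ - 1)) - rescale 2 ((exp ℚ - 1) * Bser)) := by
        rw [map_mul]
        simp only [map_sub, map_one, ← h2]
        ring
    _ = 2 * ((exp ℚ + 1) * X - rescale 2 X) := by rw [Bser_spec, mul_comm (exp ℚ - 1) Bser, Bser_spec]
    _ = (exp ℚ - 1) * (2 * X) := by rw [hX]; ring

lemma sumG (b : ℕ) :
    (∑ m ∈ range (b+1), (b.choose m : ℚ) * Gnum m) = (if b = 1 then 2 else 0) - Gnum b := by
  have h := congrArg (coeff b) Gser_spec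
  rw [add_mul, one_mul, map_add, coeff_mul, two_eq_C, coeff_C_mul, PowerSeries.coeff_X] at h
  have hb : (b ! : ℚ) ≠ 0 := by exact_mod_cast b.factorial_ne_zero
  have key : ∀ p ∈ antidiagonal b,
      (coeff p.1) (exp ℚ) * (coeff p.2) Gser = (b.choose p.2 : ℚ) * Gnum p.2 / b ! := by
    rintro ⟨i, j⟩ hp
    rw [HasAntidiagonal.mem_antidiagonal] at hp
    have h1 : j ≤ b := by omega
    have h2 : b - j = i := by omega
    have hfac : (b.choose j : ℚ) * j ! * i ! = b ! := by
      have := Nat.choose_mul_factorial_mul_factorial h1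
      rw [h2] at this
      exact_mod_cast this
    have hi : (i ! : ℚ) ≠ 0 := by exact_mod_cast i.factorial_ne_zero
    have hj : (j ! : ℚ) ≠ 0 := by exact_mod_cast j.factorial_ne_zero
    simp only [coeff_exp, Gser, PowerSeries.coeff_mk, Algebra.algebraMap_self, RingHom.id_apply]
    field_simp
    rw [← hfac]
    ring
  rw [Finset.sum_congr rfl key] at h
  rw [Nat.sum_antidiagonal_eq_sum_range_succ_mk] at h
  have hrefl := Finset.sum_range_reflect
    (fun m => (b.choose m : ℚ) * Gnum m / b !) (b+1)
  simp only [Nat.add_sub_cancel] at hrefl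
  rw [hrefl] at h
  have hG : (coeff b) Gser = Gnum b / b ! := by simp [Gser]
  rw [hG, ← Finset.sum_div] at h
  rcases eq_or_ne b 1 with rfl | hb1
  · norm_num at h ⊢
    linarith [h]
  · simp only [if_neg hb1] at h ⊢
    field_simp at h
    linarith [h]

lemma Gnum_odd_eq_zero {b : ℕ} (ho : Odd b) (hb : 1 < b) : Gnum b = 0 := by
  have : bernoulli b = 0 := by
    rw [bernoulli_eq_bernoulli'_of_ne_one (by omega)]
    exact bernoulli'_eq_zero_of_odd ho hb
  simp [Gnum, this]

lemma Gnum_one : Gnum 1 = 1 := by norm_num [Gnum]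

lemma Qg_zero_right (b : ℕ) : Qg b 0 = (-1 : ℚ) ^ (b + 1) * Gnum b := by
  have h : Qg b 0 = (if b = 1 then 2 else 0) - Gnum b := by
    rw [← sumG b]; simp [Qg]
  rcases eq_or_ne b 1 with rfl | hb1
  · simp [h, Gnum_one]
    norm_num
  · rw [h, if_neg hb1]
    rcases Nat.even_or_odd b with he | ho
    · rw [he.add_one.neg_one_pow]
      ring
    · have h1 : 1 < b := by
        rcases ho with ⟨t, rfl⟩
        omega
      rw [Gnum_odd_eq_zero ho h1]
      ring

lemma Qg_left (b : ℕ) : Qg 0 b = Gnum b := by simp [Qg]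

lemma Qg_succ (a b : ℕ) : Qg (a+1) b = Qg a b + Qg a (b+1) := by
  have h1 : Qg (a+1) b
      = (∑ i ∈ range (a+1), ((a+1).choose (i+1) : ℚ) * Gnum (b + (i+1))) + Gnum b := by
    rw [Qg, Finset.sum_range_succ']
    simp
  have h2 : ∀ i, ((a+1).choose (i+1) : ℚ) = (a.choose i : ℚ) + (a.choose (i+1) : ℚ) := by
    intro i
    rw [Nat.choose_succ_succ]
    push_cast
    ring
  have h3 : Qg a b = (∑ i ∈ range a, (a.choose (i+1) : ℚ) * Gnum (b + (i+1))) + Gnum b := by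
    rw [Qg, Finset.sum_range_succ']
    simp
  have h4 : ∑ i ∈ range (a+1), (a.choose (i+1) : ℚ) * Gnum (b + (i+1))
      = ∑ i ∈ range a, (a.choose (i+1) : ℚ) * Gnum (b + (i+1)) := by
    rw [Finset.sum_range_succ, Nat.choose_succ_self]
    simp
  have h5 : Qg a (b+1) = ∑ i ∈ range (a+1), (a.choose i : ℚ) * Gnum (b + (i+1)) := by
    rw [Qg]
    apply Finset.sum_congr rfl
    intro i _
    have : b + 1 + i = b + (i + 1) := by omega
    rw [this]
  rw [h1, h3, h5]
  simp_rw [h2, add_mul, Finset.sum_add_distrib, h4]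
  ring

lemma Qg_symm : ∀ a b : ℕ, Qg a b = (-1 : ℚ) ^ (a + b + 1) * Qg b a := by
  intro a
  induction a with
  | zero =>
    intro b
    rw [Qg_left, Qg_zero_right, zero_add, ← mul_assoc, ← pow_add]
    have : (-1 : ℚ) ^ (b + 1 + (b + 1)) = 1 := by
      rw [← two_mul, pow_mul]
      norm_num
    rw [this, one_mul]
  | succ a ih =>
    intro b
    have hswap : Qg b (a+1) = Qg (b+1) a - Qg b a := by
      rw [Qg_succ b a]; ring
    rw [Qg_succ, ih b, ih (b+1), hswap]
    have e1 : a + (b+1) + 1 = a + b + 2 := by omega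
    have e2 : a + 1 + b + 1 = a + b + 2 := by omega
    rw [e1, e2, pow_succ, pow_succ]
    ring

end Aux

/-- For every integer `k ≥ 0`, `H(k,k) = 0`. -/
theorem Hcal_diag_eq_zero (k : ℕ) : Hcal k k = 0 := by
  have hS : (∑ n ∈ Finset.Icc 1 k, (hnum k n : ℚ) * Gnum (k - n)) = 0 := by
    have step1 : (∑ n ∈ Finset.Icc 1 k, (hnum k n : ℚ) * Gnum (k - n))
        = ∑ n ∈ Finset.Icc 1 k, ∑ u ∈ Finset.Icc n k,
            (-1 : ℚ) ^ (k - u) * ((u - 1).choose (n - 1) : ℚ) * Gnum (k - n) := by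
      apply Finset.sum_congr rfl
      intro n _
      rw [hnum]
      push_cast
      rw [Finset.sum_mul]
    have step2 : (∑ n ∈ Finset.Icc 1 k, ∑ u ∈ Finset.Icc n k,
            (-1 : ℚ) ^ (k - u) * ((u - 1).choose (n - 1) : ℚ) * Gnum (k - n))
        = ∑ u ∈ Finset.Icc 1 k, ∑ n ∈ Finset.Icc 1 u,
            (-1 : ℚ) ^ (k - u) * ((u - 1).choose (n - 1) : ℚ) * Gnum (k - n) := by
      apply Finset.sum_comm'
      intro n u
      simp only [Finset.mem_Icc]
      omega
    have step3 : ∀ u ∈ Finset.Icc 1 k,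
        (∑ n ∈ Finset.Icc 1 u,
            (-1 : ℚ) ^ (k - u) * ((u - 1).choose (n - 1) : ℚ) * Gnum (k - n))
        = (-1 : ℚ) ^ (k - u) * Qg (u - 1) (k - u) := by
      intro u hu
      rw [Finset.mem_Icc] at hu
      rw [Qg]
      have hu1 : u - 1 + 1 = u := by omega
      rw [hu1, Finset.mul_sum]
      apply Finset.sum_nbij' (i := fun n => u - n) (j := fun m => u - m)
      · intro a ha
        rw [Finset.mem_Icc] at ha
        rw [Finset.mem_range]
        omega
      · intro a ha
        rw [Finset.mem_range] at ha
        rw [Finset.mem_Icc]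
        omega
      · intro a ha
        rw [Finset.mem_Icc] at ha
        omega
      · intro a ha
        rw [Finset.mem_range] at ha
        omega
      · intro n hn
        rw [Finset.mem_Icc] at hn
        have e2 : (u - 1).choose (u - n) = (u - 1).choose (n - 1) := by
          have : u - n = (u - 1) - (n - 1) := by omega
          rw [this, Nat.choose_symm (by omega : n - 1 ≤ u - 1)]
        have e3 : k - u + (u - n) = k - n := by omega
        rw [e2, e3]
        ring
    rw [step1, step2, Finset.sum_congr rfl step3]
    set T := ∑ u ∈ Finset.Icc 1 k, (-1 : ℚ) ^ (k - u) * Qg (u - 1) (k - u) with hT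
    have hTT : T = -T := by
      nth_rewrite 1 [hT]
      rw [show (-T) = ∑ u ∈ Finset.Icc 1 k,
          -((-1 : ℚ) ^ (k - u) * Qg (u - 1) (k - u)) by rw [← Finset.sum_neg_distrib]]
      apply Finset.sum_nbij' (i := fun u => k + 1 - u) (j := fun u => k + 1 - u)
      · intro a ha
        rw [Finset.mem_Icc] at ha ⊢
        omega
      · intro a ha
        rw [Finset.mem_Icc] at ha ⊢
        omega
      · intro a ha
        rw [Finset.mem_Icc] at ha
        omega
      · intro a ha
        rw [Finset.mem_Icc] at ha
        omega
      · intro u hu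
        rw [Finset.mem_Icc] at hu
        have e1 : k - (k + 1 - u) = u - 1 := by omega
        have e2 : k + 1 - u - 1 = k - u := by omega
        rw [e1, e2]
        rw [Qg_symm (k - u) (u - 1)]
        have e3 : k - u + (u - 1) + 1 = k := by omega
        rw [e3, ← mul_assoc, ← pow_add]
        have e4 : u - 1 + k = (k - u) + (2 * (u - 1) + 1) := by omega
        rw [e4, pow_add, pow_add, pow_mul]
        norm_num
    have : T = 0 := by linarith
    exact this
  rw [Hcal, hS, mul_zero]
end

section
/- For every integer k ≥ 0, G(k,k) = 2·𝔾_k if k is even and G(k,k) = 0 if k is odd; that is, G(k,k) = 2·δ_{k even}·𝔾_k. -/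
open Filter Finset Real

open PowerSeries in
/-- Generating function identity for Genocchi numbers: `G(t)·(eᵗ+1) = 2t`. -/
lemma Gps_mul_exp_add_one :
    (PowerSeries.mk (fun n => Gnum n / n.factorial) : PowerSeries ℚ) * (PowerSeries.exp ℚ + 1)
      = 2 * PowerSeries.X := by
  set B := bernoulliPowerSeries ℚ with hBdef
  set E := PowerSeries.exp ℚ with hEdef
  have hB : B * (E - 1) = X := bernoulliPowerSeries_mul_exp_sub_one ℚ
  have hG : (PowerSeries.mk (fun n => Gnum n / n.factorial) : PowerSeries ℚ)
      = 2 * B - 2 * rescale 2 B := by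
    ext n
    rw [show ((2 : PowerSeries ℚ)) = PowerSeries.C (R := ℚ) 2 from (map_ofNat (PowerSeries.C (R := ℚ)) 2).symm]
    simp only [hBdef, bernoulliPowerSeries, map_sub, PowerSeries.coeff_C_mul,
      PowerSeries.coeff_rescale, PowerSeries.coeff_mk, Algebra.algebraMap_self_apply, Gnum]
    ring
  have hE2 : rescale (2 : ℚ) E = E * E := by
    have := PowerSeries.exp_pow_eq_rescale_exp (A := ℚ) 2
    rw [← hEdef] at this
    push_cast at this
    rw [← this, sq]
  have h2 : rescale (2 : ℚ) B * (E * E - 1) = PowerSeries.C (R := ℚ) 2 * X := by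
    have : rescale (2 : ℚ) (B * (E - 1)) = rescale 2 X := by rw [hB]
    rw [map_mul, map_sub, map_one, hE2, PowerSeries.rescale_X] at this
    exact this
  have hEne : E - 1 ≠ 0 := by
    intro h
    have := congrArg (PowerSeries.coeff (R := ℚ) 1) h
    simp [hEdef, PowerSeries.coeff_exp] at this
  have key : ((PowerSeries.mk (fun n => Gnum n / n.factorial) : PowerSeries ℚ) * (E + 1)
      - 2 * X) * (E - 1) = 0 := by
    have hC2 : (PowerSeries.C (R := ℚ) 2 : PowerSeries ℚ) = 2 := map_ofNat (PowerSeries.C (R := ℚ)) 2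
    have expand : ((2 * B - 2 * rescale 2 B) * (E + 1) - 2 * X) * (E - 1)
        = 2 * (B * (E - 1)) * (E + 1) - 2 * (rescale 2 B * (E * E - 1))
          - 2 * X * (E - 1) := by ring
    rw [hG, expand, hB, h2, hC2]
    ring
  rcases mul_eq_zero.mp key with h | h
  · linear_combination h
  · exact absurd h hEne

lemma genocchi_sum (k : ℕ) :
    (∑ m ∈ range (k + 1), (k.choose m : ℚ) * Gnum m) + Gnum k
      = if k = 1 then 2 else 0 := by
  have h := congrArg (PowerSeries.coeff (R := ℚ) k) Gps_mul_exp_add_one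
  rw [PowerSeries.coeff_mul] at h
  rw [Finset.Nat.sum_antidiagonal_eq_sum_range_succ
    (f := fun i j => (PowerSeries.coeff (R := ℚ) i) (PowerSeries.mk fun n => Gnum n / n.factorial)
      * (PowerSeries.coeff (R := ℚ) j) (PowerSeries.exp ℚ + 1))] at h
  have hrhs : (PowerSeries.coeff (R := ℚ) k) (2 * PowerSeries.X) = 2 * if k = 1 then 1 else 0 := by
    rw [show ((2 : PowerSeries ℚ)) = PowerSeries.C (R := ℚ) 2 from (map_ofNat (PowerSeries.C (R := ℚ)) 2).symm]
    simp [PowerSeries.coeff_C_mul, PowerSeries.coeff_X]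
  rw [hrhs] at h
  simp only [PowerSeries.coeff_mk, map_add, PowerSeries.coeff_exp, PowerSeries.coeff_one,
    Algebra.algebraMap_self_apply] at h
  have hterm : ∀ i ∈ range (k + 1),
      Gnum i / i.factorial * ((1 / ((k - i).factorial : ℚ)) + if k - i = 0 then 1 else 0)
        = Gnum i / i.factorial * (1 / ((k - i).factorial : ℚ))
          + (if i = k then Gnum k / k.factorial else 0) := by
    intro i hi
    simp only [mem_range] at hi
    by_cases hik : i = k
    · subst hik; simp; ring
    · have : k - i ≠ 0 := by omega
      simp [this, hik]
  rw [Finset.sum_congr rfl hterm, Finset.sum_add_distrib] at h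
  rw [Finset.sum_ite_eq' (range (k + 1)) k (fun _ => Gnum k / (k.factorial : ℚ))] at h
  rw [if_pos (Finset.self_mem_range_succ k)] at h
  have hmul := congrArg (fun x => (k.factorial : ℚ) * x) h
  simp only [mul_add] at hmul
  have hfact : (k.factorial : ℚ) ≠ 0 := by exact_mod_cast k.factorial_ne_zero
  have h1 : (k.factorial : ℚ) * (Gnum k / k.factorial) = Gnum k := by field_simp
  have h2 : (k.factorial : ℚ) * ∑ i ∈ range (k + 1),
      Gnum i / i.factorial * (1 / ((k - i).factorial : ℚ))
      = ∑ m ∈ range (k + 1), (k.choose m : ℚ) * Gnum m := by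
    rw [Finset.mul_sum]
    apply Finset.sum_congr rfl
    intro i hi
    have hik : i ≤ k := by simp only [mem_range] at hi; omega
    rw [Nat.cast_choose ℚ hik]
    have hi' : (i.factorial : ℚ) ≠ 0 := by exact_mod_cast i.factorial_ne_zero
    have hki : (((k - i).factorial) : ℚ) ≠ 0 := by exact_mod_cast (k - i).factorial_ne_zero
    field_simp
  rw [h1, h2] at hmul
  rw [hmul]
  by_cases hk1 : k = 1 <;> simp [hk1, Nat.factorial]

lemma sum_choose_Gnum (k : ℕ) :
    ∑ m ∈ range k, (k.choose m : ℚ) * Gnum m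
      = (if k = 1 then 2 else 0) - 2 * Gnum k := by
  have h := genocchi_sum k
  rw [Finset.sum_range_succ] at h
  simp only [Nat.choose_self, Nat.cast_one, one_mul] at h
  linarith [h]

theorem bernoulli_odd_zero {n : ℕ} (h : Odd n) (h1 : 1 < n) : bernoulli n = 0 := by
  rw [bernoulli_eq_bernoulli'_of_ne_one (by omega)]
  exact bernoulli'_eq_zero_of_odd h h1

/-- For every integer `k ≥ 0`, `G(k,k) = 2𝔾_k` if `k` is even and `G(k,k) = 0`
if `k` is odd. -/
theorem Gcal_diag (k : ℕ) :
    Gcal k k = if Even k then 2 * GGnum k else 0 := by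
  have hre : ∑ n ∈ Finset.Icc 1 k, (k.choose n : ℚ) * Gnum (k - n)
      = ∑ m ∈ range k, (k.choose m : ℚ) * Gnum m := by
    apply Finset.sum_nbij' (i := fun n => k - n) (j := fun m => k - m)
    · intro a ha; simp only [mem_Icc] at ha; simp only [mem_range]; omega
    · intro a ha; simp only [mem_range] at ha; simp only [mem_Icc]; omega
    · intro a ha; simp only [mem_Icc] at ha; omega
    · intro a ha; simp only [mem_range] at ha; omega
    · intro a ha
      simp only [mem_Icc] at ha
      rw [Nat.choose_symm ha.2]
  rw [Gcal, hre, sum_choose_Gnum]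
  rcases Nat.even_or_odd k with he | ho
  · rw [if_pos he]
    rcases Nat.eq_zero_or_pos k with hk0 | hkpos
    · subst hk0
      simp [Gnum, GGnum]
    · obtain ⟨m, hm⟩ := he
      have hm1 : 1 ≤ m := by omega
      have hk1 : k ≠ 1 := by omega
      rw [if_neg hk1]
      have hfd : Int.fdiv ((k : ℤ) - 1) 2 = (m : ℤ) - 1 := by
        rw [Int.fdiv_eq_ediv_of_nonneg _ (by norm_num)]
        omega
      rw [hfd]
      have hz : ((-1 : ℚ)) ^ ((m : ℤ) - 1) = -(-1 : ℚ) ^ m := by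
        rw [zpow_sub₀ (by norm_num), zpow_natCast, zpow_one]
        ring
      rw [hz, GGnum]
      have : k / 2 = m := by omega
      rw [this]
      ring
  · rw [if_neg (Nat.not_even_iff_odd.mpr ho)]
    by_cases hk1 : k = 1
    · subst hk1
      norm_num [Gnum]
    · have hG0 : Gnum k = 0 := by
        have h1 : 1 < k := by
          rcases ho with ⟨m, hm⟩; omega
        rw [Gnum, bernoulli_odd_zero ho h1, mul_zero]
      rw [if_neg hk1, hG0]
      ring
end
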